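/- For a 2×2 real matrix X of coordinates, the 1-form A = (1+XᵗX)⁻¹ Xᵗ dX transformed by the gauge transformation g = (1+XᵗX)^{−1/2} (i.e., g⁻¹Ag + g⁻¹dg) takes values in the Lie algebra o(2) of antisymmetric 2×2 real matrices, pointwise. -/

import Mathlib

open Matrix

/-- ℝ⁴ identified with M₂(ℝ) via coordinates x (i,j) = x_{ij}. -/
abbrev E : Type := Fin 2 × Fin 2 → ℝ

/-- Partial derivative with respect to the coordinate x_p. -/
noncomputable def pder (p : Fin 2 × Fin 2) (f : E → ℝ) (x : E) : ℝ :=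
  deriv (fun t : ℝ => f (x + t • (Pi.single p (1 : ℝ) : E))) 0

/-- The coordinate matrix X. -/
def Xof (x : E) : Matrix (Fin 2) (Fin 2) ℝ := Matrix.of fun i j => x (i, j)

/-- The dx_p-component of the connection potential A = (1+XᵗX)⁻¹ Xᵗ dX. -/
noncomputable def Apot (p : Fin 2 × Fin 2) (x : E) : Matrix (Fin 2) (Fin 2) ℝ :=
  (1 + (Xof x)ᵀ * Xof x)⁻¹ * (Xof x)ᵀ * Matrix.single p.1 p.2 (1 : ℝ)

lemma posdef_S (y : E) : (1 + (Xof y)ᵀ * Xof y).PosDef := by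
  have h := Matrix.posSemidef_conjTranspose_mul_self (Xof y)
  rw [Matrix.conjTranspose_eq_transpose_of_trivial] at h
  exact Matrix.PosDef.add_posSemidef Matrix.PosDef.one h

/-- If g is the (positive-definite, symmetric) square root of (1+XᵗX)⁻¹, then each
    dx_p-component of g⁻¹Ag + g⁻¹dg is an antisymmetric matrix, i.e. lies in o(2). -/
theorem gauge_transformed_potential_in_o2
    (g : E → Matrix (Fin 2) (Fin 2) ℝ)
    (hpos : ∀ x, (g x).PosDef)
    (hsymm : ∀ x, (g x)ᵀ = g x)
    (hsq : ∀ x, g x * g x = (1 + (Xof x)ᵀ * Xof x)⁻¹)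
    (hdiff : ∀ i j : Fin 2, Differentiable ℝ (fun x : E => g x i j)) :
    ∀ (x : E) (p : Fin 2 × Fin 2),
      ((g x)⁻¹ * Apot p x * g x +
          (g x)⁻¹ * Matrix.of (fun i j => pder p (fun y => g y i j) x)) +
        ((g x)⁻¹ * Apot p x * g x +
          (g x)⁻¹ * Matrix.of (fun i j => pder p (fun y => g y i j) x))ᵀ = 0 := by
  intro x p
  classical
  set X : Matrix (Fin 2) (Fin 2) ℝ := Xof x with hXdef
  set G : Matrix (Fin 2) (Fin 2) ℝ := g x with hGdef
  set S : Matrix (Fin 2) (Fin 2) ℝ := 1 + Xᵀ * X with hSdef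
  set Ep : Matrix (Fin 2) (Fin 2) ℝ := Matrix.single p.1 p.2 (1 : ℝ) with hEpdef
  set D : Matrix (Fin 2) (Fin 2) ℝ :=
    Matrix.of (fun i j => pder p (fun y => g y i j) x) with hDdef
  set S' : Matrix (Fin 2) (Fin 2) ℝ := Xᵀ * Ep + Epᵀ * X with hS'def
  have hSdet : S.det ≠ 0 := ne_of_gt (posdef_S x).det_pos
  have hGdet : G.det ≠ 0 := ne_of_gt (hpos x).det_pos
  have hggS : ∀ y : E, g y * g y * (1 + (Xof y)ᵀ * Xof y) = 1 := fun y => by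
    rw [hsq y]
    exact Matrix.nonsing_inv_mul _ (isUnit_iff_ne_zero.mpr (ne_of_gt (posdef_S y).det_pos))
  -- the line through x in direction p
  set e : E := Pi.single p (1 : ℝ) with hedef
  set c : ℝ → E := fun t => x + t • e with hcdef
  have hc0 : c 0 = x := by simp [hcdef]
  have hcdiff : Differentiable ℝ c :=
    (differentiable_id.smul_const e).const_add x
  -- derivative of the entries of g along the line
  have hg : ∀ i j : Fin 2, HasDerivAt (fun t => g (c t) i j) (D i j) 0 := by
    intro i j
    have h1 : DifferentiableAt ℝ ((fun y => g y i j) ∘ c) 0 :=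
      DifferentiableAt.comp 0 ((hdiff i j).differentiableAt) (hcdiff 0)
    have := h1.hasDerivAt
    exact this
  -- derivative of the entries of X along the line
  have hXd : ∀ i j : Fin 2, HasDerivAt (fun t => Xof (c t) i j) (Ep i j) 0 := by
    intro i j
    have h1 : HasDerivAt (fun t : ℝ => x (i, j) + t * e (i, j)) (e (i, j)) 0 := by
      simpa using ((hasDerivAt_id (0 : ℝ)).mul_const (e (i, j))).const_add (x (i, j))
    have heq : (fun t => Xof (c t) i j) = fun t : ℝ => x (i, j) + t * e (i, j) := by
      funext t
      simp [Xof, hcdef, smul_eq_mul]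
    have hval : e (i, j) = Ep i j := by
      rcases p with ⟨a, b⟩
      simp [hedef, hEpdef, Pi.single_apply, Matrix.single, Prod.ext_iff, eq_comm,
        and_comm]
    rw [heq]
    exact hval ▸ h1
  -- derivative of the entries of S along the line
  have hSd : ∀ i j : Fin 2,
      HasDerivAt (fun t => (1 + (Xof (c t))ᵀ * Xof (c t)) i j) (S' i j) 0 := by
    intro i j
    have h1 : HasDerivAt
        (fun t => (1 : Matrix (Fin 2) (Fin 2) ℝ) i j +
          ∑ k : Fin 2, Xof (c t) k i * Xof (c t) k j)
        (∑ k : Fin 2, (Ep k i * Xof (c 0) k j + Xof (c 0) k i * Ep k j)) 0 := by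
      refine HasDerivAt.const_add _ (HasDerivAt.fun_sum fun k _ => ?_)
      exact (hXd k i).mul (hXd k j)
    have heq : (fun t => (1 + (Xof (c t))ᵀ * Xof (c t)) i j) =
        fun t => (1 : Matrix (Fin 2) (Fin 2) ℝ) i j +
          ∑ k : Fin 2, Xof (c t) k i * Xof (c t) k j := by
      funext t
      simp [Matrix.add_apply, Matrix.mul_apply, Matrix.transpose_apply]
    have hval : S' i j =
        ∑ k : Fin 2, (Ep k i * Xof (c 0) k j + Xof (c 0) k i * Ep k j) := by
      rw [hc0]
      simp [hS'def, Matrix.add_apply, Matrix.mul_apply, Matrix.transpose_apply,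
        Finset.sum_add_distrib, hXdef]
      ring
    rw [heq, hval]
    exact h1
  -- the key matrix identity from differentiating g·g·S = 1
  have key : D * G * S + G * D * S + G * G * S' = 0 := by
    ext i j
    have hconst : (fun t => (g (c t) * g (c t) * (1 + (Xof (c t))ᵀ * Xof (c t))) i j) =
        fun _ : ℝ => (1 : Matrix (Fin 2) (Fin 2) ℝ) i j := by
      funext t
      rw [hggS (c t)]
    have h0 : HasDerivAt
        (fun t => (g (c t) * g (c t) * (1 + (Xof (c t))ᵀ * Xof (c t))) i j) 0 0 := by
      rw [hconst]; exact hasDerivAt_const _ _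
    have h1 : HasDerivAt
        (fun t => (g (c t) * g (c t) * (1 + (Xof (c t))ᵀ * Xof (c t))) i j)
        ((D * G * S + G * D * S + G * G * S') i j) 0 := by
      have heq : (fun t => (g (c t) * g (c t) * (1 + (Xof (c t))ᵀ * Xof (c t))) i j) =
          fun t => ∑ l : Fin 2, (∑ k : Fin 2, g (c t) i k * g (c t) k l) *
            (1 + (Xof (c t))ᵀ * Xof (c t)) l j := by
        funext t
        simp [Matrix.mul_apply]
      have h2 : HasDerivAt
          (fun t => ∑ l : Fin 2, (∑ k : Fin 2, g (c t) i k * g (c t) k l) *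
            (1 + (Xof (c t))ᵀ * Xof (c t)) l j)
          (∑ l : Fin 2,
            ((∑ k : Fin 2, (D i k * G k l + G i k * D k l)) * S l j +
              (∑ k : Fin 2, G i k * G k l) * S' l j)) 0 := by
        refine HasDerivAt.fun_sum fun l _ => ?_
        have hgg : HasDerivAt (fun t => ∑ k : Fin 2, g (c t) i k * g (c t) k l)
            (∑ k : Fin 2, (D i k * g (c 0) k l + g (c 0) i k * D k l)) 0 :=
          HasDerivAt.fun_sum fun k _ => (hg i k).mul (hg k l)
        have hS1 : HasDerivAt (fun t => (1 + (Xof (c t))ᵀ * Xof (c t)) l j) (S' l j) 0 :=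
          hSd l j
        have := hgg.mul hS1
        simp only [hc0] at this ⊢
        exact this
      rw [heq]
      convert h2 using 1
      simp only [Matrix.add_apply, Matrix.mul_apply, Finset.sum_add_distrib, Finset.mul_sum,
        Finset.sum_mul, add_mul]
    have := h1.unique h0
    simpa [Matrix.zero_apply] using this
  -- algebraic facts
  have hGsymm : Gᵀ = G := hsymm x
  have hGG : G * G = S⁻¹ := by rw [hGdef, hSdef, hXdef]; exact hsq x
  have hGiG : G⁻¹ * G = 1 := Matrix.nonsing_inv_mul _ (isUnit_iff_ne_zero.mpr hGdet)
  have hGGi : G * G⁻¹ = 1 := Matrix.mul_nonsing_inv _ (isUnit_iff_ne_zero.mpr hGdet)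
  have hSSi : S * S⁻¹ = 1 := Matrix.mul_nonsing_inv _ (isUnit_iff_ne_zero.mpr hSdet)
  have h1 : G⁻¹ * S⁻¹ = G := by rw [← hGG, ← mul_assoc, hGiG, one_mul]
  have h2 : S⁻¹ * G⁻¹ = G := by rw [← hGG, mul_assoc, hGGi, mul_one]
  have hGit : (G⁻¹)ᵀ = G⁻¹ := by rw [Matrix.transpose_nonsing_inv, hGsymm]
  have hSsymm : Sᵀ = S := by
    rw [hSdef]
    simp [Matrix.transpose_add, Matrix.transpose_mul, Matrix.transpose_transpose]
  have hSit : (S⁻¹)ᵀ = S⁻¹ := by rw [Matrix.transpose_nonsing_inv, hSsymm]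
  have hDsymm : Dᵀ = D := by
    ext i j
    rw [Matrix.transpose_apply]
    show pder p (fun y => g y j i) x = pder p (fun y => g y i j) x
    congr 1
    funext y
    conv_lhs => rw [← hsymm y]
    rw [Matrix.transpose_apply]
  have hA : Apot p x = S⁻¹ * Xᵀ * Ep := by
    simp only [Apot]
    rfl
  -- consequence of key
  have k2 := congrArg (fun M => M * S⁻¹) key
  simp only [add_mul, zero_mul, mul_assoc, hSSi, mul_one] at k2
  have k3 : D * G + G * D = -(G * (G * (S' * S⁻¹))) := by
    rw [eq_neg_iff_add_eq_zero]
    linear_combination (norm := abel) k2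
  have hterm : G⁻¹ * D + D * G⁻¹ = -(G * (S' * G)) := by
    have e1 : G⁻¹ * D = G⁻¹ * (D * G * G⁻¹) := by rw [mul_assoc, hGGi, mul_one]
    have e2 : D * G⁻¹ = G⁻¹ * (G * D * G⁻¹) := by
      rw [← mul_assoc, ← mul_assoc, hGiG, one_mul]
    rw [e1, e2, ← mul_add, ← add_mul, k3]
    simp only [neg_mul, mul_neg, mul_assoc]
    rw [h2, ← mul_assoc G⁻¹ G, hGiG, one_mul]
  -- the two gauge-transformed A pieces
  have hA1 : G⁻¹ * (S⁻¹ * Xᵀ * Ep) * G = G * (Xᵀ * (Ep * G)) := by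
    simp only [mul_assoc]
    rw [← mul_assoc G⁻¹ S⁻¹, h1]
  have hA2 : (G⁻¹ * (S⁻¹ * Xᵀ * Ep) * G)ᵀ = G * (Epᵀ * (X * G)) := by
    simp only [Matrix.transpose_mul, Matrix.transpose_transpose, hGit, hGsymm, hSit]
    simp only [mul_assoc]
    rw [h2]
  have hsum : G * (Xᵀ * (Ep * G)) + G * (Epᵀ * (X * G)) = G * (S' * G) := by
    rw [hS'def]
    simp only [add_mul, mul_add, mul_assoc]
  -- assemble
  rw [hA, Matrix.transpose_add,
    show (G⁻¹ * D)ᵀ = D * G⁻¹ by rw [Matrix.transpose_mul, hDsymm, hGit]]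
  have rearr : (G⁻¹ * (S⁻¹ * Xᵀ * Ep) * G + G⁻¹ * D) +
      ((G⁻¹ * (S⁻¹ * Xᵀ * Ep) * G)ᵀ + D * G⁻¹) =
      (G⁻¹ * (S⁻¹ * Xᵀ * Ep) * G + (G⁻¹ * (S⁻¹ * Xᵀ * Ep) * G)ᵀ) +
      (G⁻¹ * D + D * G⁻¹) := by abel
  rw [rearr, hA2, hA1, hsum, hterm, add_neg_cancel]
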